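/- There are exactly 33 isomorphism classes of rooted trees on 9 vertices whose in-degree type is the multiset {3,2,1,1,1,1,0,0,0} (type G: in-degree 0 with multiplicity 3, in-degree 1 with multiplicity 4, in-degree 2 with multiplicity 1, in-degree 3 with multiplicity 1). -/

import Mathlib

/-- A rooted tree on the vertex set `Fin n`, encoded by a parent function
`parent` with `parent root = root` such that every vertex reaches the root
under iteration of `parent`. -/
structure ParentTree (n : ℕ) where
  parent : Fin n → Fin n
  root : Fin n
  parent_root : parent root = root
  reaches_root : ∀ v : Fin n, ∃ k : ℕ, parent^[k] v = root

/-- Two rooted trees are isomorphic if some bijection of the vertices carries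
root to root and intertwines the parent functions (equivalently, it is a graph
isomorphism of the underlying trees carrying root to root). -/
def ParentTreeIso (n : ℕ) (t₁ t₂ : ParentTree n) : Prop :=
  ∃ σ : Equiv.Perm (Fin n),
    σ t₁.root = t₂.root ∧ ∀ v, σ (t₁.parent v) = t₂.parent (σ v)

/-- The in-degree of a vertex `v`: the number of vertices whose parent is `v`.
Since `parent root = root`, this counts the loop at the root, i.e. the root's
in-degree is its number of children plus one, while for any other vertex it is
the number of vertices (other than `v`) whose parent is `v`. -/
def inDeg {n : ℕ} (t : ParentTree n) (v : Fin n) : ℕ :=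
  (Finset.univ.filter (fun u => t.parent u = v)).card

/-- The in-degree type of a rooted tree: the multiset of in-degrees of its
vertices. -/
def inDegType {n : ℕ} (t : ParentTree n) : Multiset ℕ :=
  Multiset.map (inDeg t) (Finset.univ.val : Multiset (Fin n))

/-- In-degree type G. -/
def typeG : Multiset ℕ := ({3,2,1,1,1,1,0,0,0} : Multiset ℕ)

inductive RT where
  | node : List RT → RT

namespace RT

mutual
def beq : RT → RT → Bool
  | .node cs, .node ds => beqL cs ds
def beqL : List RT → List RT → Bool
  | [], [] => true
  | c :: cs, d :: ds => beq c d && beqL cs ds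
  | _, _ => false
end

mutual
theorem beq_iff : ∀ a b : RT, beq a b = true ↔ a = b
  | .node cs, .node ds => by
    simp only [beq, beqL_iff cs ds, RT.node.injEq]
theorem beqL_iff : ∀ cs ds : List RT, beqL cs ds = true ↔ cs = ds
  | [], [] => by simp [beqL]
  | c :: cs, d :: ds => by
    simp [beqL, Bool.and_eq_true, beq_iff c d, beqL_iff cs ds]
  | [], _ :: _ => by simp [beqL]
  | _ :: _, [] => by simp [beqL]
end

instance : DecidableEq RT := fun a b => decidable_of_iff _ (beq_iff a b)

mutual
def size : RT → ℕ
  | .node cs => 1 + sizeL cs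
def sizeL : List RT → ℕ
  | [] => 0
  | c :: cs => size c + sizeL cs
end

mutual
def enc : RT → ℕ
  | .node cs => encL cs
def encL : List RT → ℕ
  | [] => 0
  | c :: cs => Nat.pair (enc c) (encL cs) + 1
end

mutual
theorem enc_inj : ∀ a b : RT, enc a = enc b → a = b
  | .node cs, .node ds => by
    simp only [enc, RT.node.injEq]
    exact encL_inj cs ds
theorem encL_inj : ∀ cs ds : List RT, encL cs = encL ds → cs = ds
  | [], [] => fun _ => rfl
  | c :: cs, d :: ds => by
    simp only [encL, Nat.add_right_cancel_iff, Nat.pair_eq_pair]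
    rintro ⟨h1, h2⟩
    rw [enc_inj c d h1, encL_inj cs ds h2]
  | [], _ :: _ => by simp [encL]
  | _ :: _, [] => by simp [encL]
end

def leE (a b : RT) : Prop := enc a ≤ enc b

instance : DecidableRel leE := fun a b => Nat.decLe _ _

instance : IsTotal RT leE := ⟨fun a b => Nat.le_total _ _⟩

instance : IsTrans RT leE := ⟨fun _ _ _ => Nat.le_trans⟩

def sortRT (l : List RT) : List RT := List.insertionSort leE l

theorem sortRT_perm (l : List RT) : (sortRT l).Perm l := List.perm_insertionSort leE l

theorem sortRT_sorted (l : List RT) : (sortRT l).Pairwise leE :=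
  List.pairwise_insertionSort leE l

theorem sortRT_eq_of_perm {l₁ l₂ : List RT} (h : l₁.Perm l₂) : sortRT l₁ = sortRT l₂ := by
  have hp : (sortRT l₁).Perm (sortRT l₂) := ((sortRT_perm l₁).trans h).trans (sortRT_perm l₂).symm
  have h1 := sortRT_sorted l₁
  have h2 := sortRT_sorted l₂
  have hm : (sortRT l₁).map enc = (sortRT l₂).map enc := by
    refine List.Perm.eq_of_pairwise' (r := fun a b : ℕ => a ≤ b) ?_ ?_ (hp.map enc) <;>
      · rw [List.pairwise_map]
        first
        | exact h1
        | exact h2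
  exact List.map_injective_iff.mpr enc_inj hm

def sortMS : Multiset RT → List RT :=
  Quot.lift sortRT (fun _ _ h => sortRT_eq_of_perm h)

theorem sortMS_coe (m : Multiset RT) : (sortMS m : Multiset RT) = m := by
  induction m using Quot.ind with
  | _ l => exact Quot.sound (sortRT_perm l)

theorem sortMS_sorted (m : Multiset RT) :
    (sortMS m).Pairwise leE := by
  induction m using Quot.ind with
  | _ l => exact sortRT_sorted l

end RT

namespace PT

variable {n : ℕ}

/-- children of `v` -/
def chn (t : ParentTree n) (v : Fin n) : Finset (Fin n) :=
  Finset.univ.filter (fun u => t.parent u = v ∧ u ≠ v)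

theorem mem_chn {t : ParentTree n} {v u : Fin n} :
    u ∈ chn t v ↔ t.parent u = v ∧ u ≠ v := by
  simp [chn]

theorem iter_root (t : ParentTree n) (k : ℕ) : t.parent^[k] t.root = t.root :=
  Function.iterate_fixed t.parent_root k

theorem eq_root_of_iterate_fixed {t : ParentTree n} {u : Fin n} {k : ℕ}
    (h : t.parent^[k] u = u) (hk : 0 < k) : u = t.root := by
  obtain ⟨m, hm⟩ := t.reaches_root u
  have hq : t.parent^[k * m] u = u := by
    rw [Function.iterate_mul]
    exact Function.iterate_fixed h m
  have hle : m ≤ k * m := Nat.le_mul_of_pos_left m hk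
  have : t.parent^[k * m - m + m] u = u := by rwa [Nat.sub_add_cancel hle]
  rw [Function.iterate_add_apply, hm, iter_root] at this
  exact this.symm

theorem reach_bound {t : ParentTree n} {u v : Fin n}
    (h : ∃ k, t.parent^[k] u = v) : ∃ k ≤ n, t.parent^[k] u = v := by
  classical
  let k := Nat.find h
  have hk : t.parent^[k] u = v := Nat.find_spec h
  refine ⟨k, ?_, hk⟩
  by_contra hgt
  push_neg at hgt
  -- i ↦ p^[i] u injective on range (k+1)
  have hinj : Set.InjOn (fun i => t.parent^[i] u) (Finset.range (k+1)) := by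
    intro i hi j hj hij
    simp only [Finset.coe_range, Set.mem_Iio] at hi hj
    by_contra hne
    -- wlog i < j
    rcases Nat.lt_or_ge i j with hlt | hge
    case _ =>
      have hper : t.parent^[j - i] (t.parent^[i] u) = t.parent^[i] u := by
        dsimp at hij
        rw [← Function.iterate_add_apply, Nat.sub_add_cancel hlt.le, ← hij]
      have hroot : t.parent^[i] u = t.root :=
        eq_root_of_iterate_fixed hper (Nat.sub_pos_of_lt hlt)
      have hvr : v = t.root := by
        have : t.parent^[k - i + i] u = v := by
          rwa [Nat.sub_add_cancel (Nat.lt_succ_iff.mp hi)]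
        rw [← this, Function.iterate_add_apply, hroot, iter_root]
      have hik : i < k := lt_of_lt_of_le hlt (Nat.lt_succ_iff.mp hj)
      exact Nat.find_min h hik (by rw [hroot, hvr])
    case _ =>
      have hlt : j < i := lt_of_le_of_ne hge (Ne.symm hne)
      have hper : t.parent^[i - j] (t.parent^[j] u) = t.parent^[j] u := by
        dsimp at hij
        rw [← Function.iterate_add_apply, Nat.sub_add_cancel hlt.le, hij]
      have hroot : t.parent^[j] u = t.root :=
        eq_root_of_iterate_fixed hper (Nat.sub_pos_of_lt hlt)
      have hvr : v = t.root := by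
        have : t.parent^[k - j + j] u = v := by
          rwa [Nat.sub_add_cancel (Nat.lt_succ_iff.mp hj)]
        rw [← this, Function.iterate_add_apply, hroot, iter_root]
      have hjk : j < k := lt_of_lt_of_le hlt (Nat.lt_succ_iff.mp hi)
      exact Nat.find_min h hjk (by rw [hroot, hvr])
  have hcard := Finset.card_le_card_of_injOn (fun i => t.parent^[i] u)
    (fun a _ => Finset.mem_univ _) hinj
  simp only [Finset.card_range, Finset.card_univ, Fintype.card_fin] at hcard
  omega

/-- descendants of `v` (including `v`) -/
def Dset (t : ParentTree n) (v : Fin n) : Finset (Fin n) :=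
  (Finset.range (n+1)).biUnion (fun k => Finset.univ.filter (fun u => t.parent^[k] u = v))

theorem mem_Dset {t : ParentTree n} {v u : Fin n} :
    u ∈ Dset t v ↔ ∃ k, t.parent^[k] u = v := by
  simp only [Dset, Finset.mem_biUnion, Finset.mem_filter, Finset.mem_univ, true_and,
    Finset.mem_range]
  constructor
  · rintro ⟨k, _, hk⟩; exact ⟨k, hk⟩
  · intro h
    obtain ⟨k, hk, hkv⟩ := reach_bound h
    exact ⟨k, by omega, hkv⟩

theorem self_mem_Dset (t : ParentTree n) (v : Fin n) : v ∈ Dset t v :=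
  mem_Dset.mpr ⟨0, rfl⟩

theorem parent_mem_Dset {t : ParentTree n} {v u : Fin n}
    (hu : u ∈ Dset t v) (hne : u ≠ v) : t.parent u ∈ Dset t v := by
  rw [mem_Dset] at hu ⊢
  obtain ⟨k, hk⟩ := hu
  match k, hk with
  | 0, hk => exact absurd hk hne
  | k+1, hk => exact ⟨k, by rwa [Function.iterate_succ_apply] at hk⟩

theorem Dset_child_subset {t : ParentTree n} {v c : Fin n} (hc : c ∈ chn t v) :
    Dset t c ⊆ Dset t v := by
  intro u hu
  rw [mem_Dset] at hu ⊢
  obtain ⟨k, hk⟩ := hu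
  exact ⟨k + 1, by rw [Function.iterate_succ_apply', hk, (mem_chn.mp hc).1]⟩

theorem root_not_mem_Dset_child {t : ParentTree n} {v c : Fin n} (hc : c ∈ chn t v) :
    v ∉ Dset t c := by
  obtain ⟨hpc, hcv⟩ := mem_chn.mp hc
  intro hv
  obtain ⟨k, hk⟩ := mem_Dset.mp hv
  have : t.parent^[k + 1] v = v := by
    rw [Function.iterate_succ_apply', hk, hpc]
  have hvr : v = t.root := eq_root_of_iterate_fixed this (Nat.succ_pos k)
  apply hcv
  rw [← hk, hvr, iter_root]

theorem Dset_disjoint {t : ParentTree n} {v c c' : Fin n} (hc : c ∈ chn t v)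
    (hc' : c' ∈ chn t v) (hne : c ≠ c') : Disjoint (Dset t c) (Dset t c') := by
  rw [Finset.disjoint_left]
  intro u hu hu'
  obtain ⟨i, hi⟩ := mem_Dset.mp hu
  obtain ⟨j, hj⟩ := mem_Dset.mp hu'
  obtain ⟨hpc, hcv⟩ := mem_chn.mp hc
  obtain ⟨hpc', hcv'⟩ := mem_chn.mp hc'
  -- wlog i ≤ j
  rcases Nat.le_total i j with hle | hle
  · rcases Nat.eq_or_lt_of_le hle with heq | hlt
    · exact hne (by rw [← hi, heq, hj])
    · have h1 : t.parent^[j - i] c = c' := by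
        rw [← hi, ← Function.iterate_add_apply, Nat.sub_add_cancel hle, hj]
      have h2 : t.parent^[j - i] v = v := by
        have : t.parent^[j - i - 1 + 1] c = c' := by
          rwa [Nat.sub_add_cancel (by omega)]
        rw [Function.iterate_succ_apply, hpc] at this
        calc t.parent^[j-i] v = t.parent^[j - i - 1 + 1] v := by
              rw [Nat.sub_add_cancel (by omega)]
          _ = t.parent (t.parent^[j-i-1] v) := by rw [Function.iterate_succ_apply']
          _ = t.parent c' := by rw [this]
          _ = v := hpc'
      have hvr : v = t.root := eq_root_of_iterate_fixed h2 (by omega)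
      apply hcv'
      have : t.parent^[j - i - 1 + 1] c = c' := by
        rwa [Nat.sub_add_cancel (by omega)]
      rw [Function.iterate_succ_apply, hpc] at this
      rw [← this, hvr, iter_root]
  · rcases Nat.eq_or_lt_of_le hle with heq | hlt
    · exact hne (by rw [← hi, ← heq, hj])
    · have h1 : t.parent^[i - j] c' = c := by
        rw [← hj, ← Function.iterate_add_apply, Nat.sub_add_cancel hle, hi]
      have h2 : t.parent^[i - j] v = v := by
        have : t.parent^[i - j - 1 + 1] c' = c := by
          rwa [Nat.sub_add_cancel (by omega)]
        rw [Function.iterate_succ_apply, hpc'] at this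
        calc t.parent^[i-j] v = t.parent^[i - j - 1 + 1] v := by
              rw [Nat.sub_add_cancel (by omega)]
          _ = t.parent (t.parent^[i-j-1] v) := by rw [Function.iterate_succ_apply']
          _ = t.parent c := by rw [this]
          _ = v := hpc
      have hvr : v = t.root := eq_root_of_iterate_fixed h2 (by omega)
      apply hcv
      have : t.parent^[i - j - 1 + 1] c' = c := by
        rwa [Nat.sub_add_cancel (by omega)]
      rw [Function.iterate_succ_apply, hpc'] at this
      rw [← this, hvr, iter_root]

theorem Dset_cover {t : ParentTree n} {v u : Fin n} (hu : u ∈ Dset t v) (hne : u ≠ v) :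
    ∃ c ∈ chn t v, u ∈ Dset t c := by
  classical
  have h : ∃ k, t.parent^[k] u = v := mem_Dset.mp hu
  have hk0 : Nat.find h ≠ 0 := by
    intro h0
    apply hne
    have := Nat.find_spec h
    rw [h0] at this
    exact this
  obtain ⟨k', hk'⟩ : ∃ k', Nat.find h = k' + 1 := ⟨Nat.find h - 1, by omega⟩
  refine ⟨t.parent^[k'] u, ?_, mem_Dset.mpr ⟨k', rfl⟩⟩
  rw [mem_chn]
  constructor
  · have hs : t.parent^[k' + 1] u = v := by
      rw [← hk']; exact Nat.find_spec h
    rwa [Function.iterate_succ_apply'] at hs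
  · intro hcv
    exact Nat.find_min h (by omega) hcv

theorem Dset_partition (t : ParentTree n) (v : Fin n) :
    Dset t v = insert v ((chn t v).biUnion (Dset t)) := by
  ext u
  simp only [Finset.mem_insert, Finset.mem_biUnion]
  constructor
  · intro hu
    by_cases hne : u = v
    · exact Or.inl hne
    · exact Or.inr (Dset_cover hu hne)
  · rintro (rfl | ⟨c, hc, hu⟩)
    · exact self_mem_Dset t u
    · exact Dset_child_subset hc hu

theorem card_Dset_child_lt {t : ParentTree n} {v c : Fin n} (hc : c ∈ chn t v) :
    (Dset t c).card < (Dset t v).card := by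
  apply Finset.card_lt_card
  rw [Finset.ssubset_iff_of_subset (Dset_child_subset hc)]
  exact ⟨v, self_mem_Dset t v, root_not_mem_Dset_child hc⟩

end PT

namespace RT

mutual
def degL : RT → List ℕ
  | .node cs => cs.length :: degLF cs
def degLF : List RT → List ℕ
  | [] => []
  | c :: cs => degL c ++ degLF cs
end

def bumpedMS : RT → Multiset ℕ
  | .node cs => (cs.length + 1) ::ₘ (degLF cs : List ℕ)

def leB (a b : RT) : Bool := enc a ≤ enc b

def sortedEnc : List RT → Bool
  | [] => true
  | [_] => true
  | a :: b :: l => leB a b && sortedEnc (b :: l)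

mutual
def canonP : RT → Bool
  | .node cs => sortedEnc cs && canonL cs
def canonL : List RT → Bool
  | [] => true
  | c :: cs => canonP c && canonL cs
end

theorem canonL_iff : ∀ l : List RT, canonL l = true ↔ ∀ c ∈ l, canonP c = true := by
  intro l
  induction l with
  | nil => simp [canonL]
  | cons c cs ih => simp [canonL, ih]

theorem sortedEnc_iff_chain : ∀ l : List RT,
    sortedEnc l = true ↔ List.Chain' (fun a b => leB a b = true) l := by
  intro l
  match l with
  | [] => simp [sortedEnc, List.Chain']
  | [a] => simp [sortedEnc, List.Chain']
  | a :: b :: l =>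
    rw [show List.Chain' (fun a b => leB a b = true) (a :: b :: l) ↔ (leB a b = true ∧ List.Chain' (fun a b => leB a b = true) (b :: l)) from List.isChain_cons_cons, ← sortedEnc_iff_chain (b :: l)]
    simp [sortedEnc]

theorem sortedEnc_of_pairwise {l : List RT}
    (h : l.Pairwise leE) : sortedEnc l = true := by
  rw [sortedEnc_iff_chain]
  apply List.Pairwise.isChain
  exact h.imp (fun hab => decide_eq_true hab)

theorem degLF_coe : ∀ l : List RT,
    (degLF l : Multiset ℕ) = (Multiset.map (fun c => (degL c : Multiset ℕ)) (l : Multiset RT)).sum := by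
  intro l
  induction l with
  | nil => simp [degLF]
  | cons c cs ih =>
    simp only [degLF]
    rw [← Multiset.cons_coe, Multiset.map_cons, Multiset.sum_cons, ← ih]
    exact_mod_cast rfl

theorem degLF_sortMS (m : Multiset RT) :
    (degLF (sortMS m) : Multiset ℕ) = (Multiset.map (fun c => (degL c : Multiset ℕ)) m).sum := by
  rw [degLF_coe, sortMS_coe]

theorem sizeL_coe : ∀ l : List RT,
    sizeL l = (Multiset.map size (l : Multiset RT)).sum := by
  intro l
  induction l with
  | nil => simp [sizeL]
  | cons c cs ih =>
    simp only [sizeL]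
    rw [← Multiset.cons_coe, Multiset.map_cons, Multiset.sum_cons, ih]

theorem sizeL_sortMS (m : Multiset RT) :
    sizeL (sortMS m) = (Multiset.map size m).sum := by
  rw [sizeL_coe, sortMS_coe]

theorem length_sortMS (m : Multiset RT) :
    (sortMS m).length = Multiset.card m := by
  have := sortMS_coe m
  calc (sortMS m).length = Multiset.card (sortMS m : Multiset RT) := rfl
    _ = Multiset.card m := by rw [this]

theorem mem_sortMS {m : Multiset RT} {c : RT} : c ∈ sortMS m ↔ c ∈ m := by
  constructor
  · intro h
    rw [← sortMS_coe m]
    exact_mod_cast h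
  · intro h
    rw [← sortMS_coe m] at h
    exact_mod_cast h

end RT

namespace PT

variable {n : ℕ}

def codeAt (t : ParentTree n) (f : ℕ) : Fin n → RT :=
  match f with
  | 0 => fun _ => .node []
  | f + 1 => fun v => .node (RT.sortMS (Multiset.map (codeAt t f) (chn t v).val))

def codeOf (t : ParentTree n) : RT := codeAt t n t.root

theorem chn_iso {t₁ t₂ : ParentTree n} (σ : Equiv.Perm (Fin n))
    (hp : ∀ v, σ (t₁.parent v) = t₂.parent (σ v)) (v : Fin n) :
    chn t₂ (σ v) = (chn t₁ v).map (σ : Fin n ↪ Fin n) := by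
  ext u
  simp only [mem_chn, Finset.mem_map, Equiv.coe_toEmbedding]
  constructor
  · rintro ⟨h1, h2⟩
    refine ⟨σ.symm u, ⟨?_, ?_⟩, by simp⟩
    · apply σ.injective
      rw [hp, Equiv.apply_symm_apply, h1]
    · intro hw
      apply h2
      rw [← Equiv.apply_symm_apply σ u, hw]
  · rintro ⟨w, ⟨h1, h2⟩, rfl⟩
    exact ⟨by rw [← hp, h1], fun hw => h2 (σ.injective hw)⟩

theorem codeAt_iso {t₁ t₂ : ParentTree n} (σ : Equiv.Perm (Fin n))
    (hp : ∀ v, σ (t₁.parent v) = t₂.parent (σ v)) :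
    ∀ f v, codeAt t₂ f (σ v) = codeAt t₁ f v := by
  intro f
  induction f with
  | zero => intro v; rfl
  | succ f ih =>
    intro v
    simp only [codeAt]
    congr 1
    apply congrArg RT.sortMS
    rw [chn_iso σ hp v, Finset.map_val, Multiset.map_map]
    exact Multiset.map_congr rfl (fun c _ => ih c)

theorem codeOf_iso {t₁ t₂ : ParentTree n} (h : ParentTreeIso n t₁ t₂) :
    codeOf t₁ = codeOf t₂ := by
  obtain ⟨σ, hr, hp⟩ := h
  have := codeAt_iso σ hp n t₁.root
  rw [hr] at this
  exact this.symm

theorem card_Dset_pos (t : ParentTree n) (v : Fin n) : 0 < (Dset t v).card :=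
  Finset.card_pos.mpr ⟨v, self_mem_Dset t v⟩

theorem not_mem_biUnion_chn (t : ParentTree n) (v : Fin n) :
    v ∉ (chn t v).biUnion (Dset t) := by
  rw [Finset.mem_biUnion]
  rintro ⟨c, hc, hv⟩
  exact root_not_mem_Dset_child hc hv

theorem card_Dset_eq (t : ParentTree n) (v : Fin n) :
    (Dset t v).card = 1 + ∑ c ∈ chn t v, (Dset t c).card := by
  rw [Dset_partition t v, Finset.card_insert_of_notMem (not_mem_biUnion_chn t v),
    Finset.card_biUnion (fun c hc c' hc' hne => Dset_disjoint hc hc' hne)]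
  omega

theorem size_codeAt (t : ParentTree n) :
    ∀ f v, (Dset t v).card ≤ f → RT.size (codeAt t f v) = (Dset t v).card := by
  intro f
  induction f with
  | zero =>
    intro v hv
    exact absurd hv (by have := card_Dset_pos t v; omega)
  | succ f ih =>
    intro v hv
    have hcard := card_Dset_eq t v
    simp only [codeAt, RT.size]
    rw [RT.sizeL_sortMS, Multiset.map_map]
    have : Multiset.map (RT.size ∘ codeAt t f) (chn t v).val
        = Multiset.map (fun c => (Dset t c).card) (chn t v).val := by
      apply Multiset.map_congr rfl
      intro c hc
      have hlt := card_Dset_child_lt (c := c) hc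
      exact ih c (by omega)
    rw [this]
    rw [hcard]
    rfl

theorem map_biUnion_val {α γ : Type*} [DecidableEq α] [DecidableEq (Fin n)]
    {s : Finset (Fin n)} {f : Fin n → Finset α}
    (hd : ∀ x ∈ s, ∀ y ∈ s, x ≠ y → Disjoint (f x) (f y)) (g : α → γ) :
    (s.biUnion f).val.map g = (Multiset.map (fun a => (f a).val.map g) s.val).sum := by
  classical
  induction s using Finset.induction_on with
  | empty => simp
  | @insert a s ha ih =>
    have hdj : Disjoint (f a) (s.biUnion f) := by
      rw [Finset.disjoint_biUnion_right]
      intro b hb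
      exact hd a (Finset.mem_insert_self a s) b (Finset.mem_insert_of_mem hb)
        (fun h => ha (h ▸ hb))
    have hval : ((f a).disjUnion (s.biUnion f) hdj).val = (f a).val + (s.biUnion f).val := rfl
    rw [Finset.insert_val, Multiset.ndinsert_of_notMem ha, Multiset.map_cons,
      Multiset.sum_cons, Finset.biUnion_insert, ← Finset.disjUnion_eq_union _ _ hdj,
      hval, Multiset.map_add,
      ih (fun x hx y hy => hd x (Finset.mem_insert_of_mem hx) y (Finset.mem_insert_of_mem hy))]

theorem degL_codeAt (t : ParentTree n) :
    ∀ f v, (Dset t v).card ≤ f →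
      (RT.degL (codeAt t f v) : Multiset ℕ)
        = (Dset t v).val.map (fun u => (chn t u).card) := by
  intro f
  induction f with
  | zero =>
    intro v hv
    exact absurd hv (by have := card_Dset_pos t v; omega)
  | succ f ih =>
    intro v hv
    simp only [codeAt, RT.degL]
    rw [← Multiset.cons_coe]
    rw [Dset_partition t v, Finset.insert_val, Multiset.ndinsert_of_notMem
      (not_mem_biUnion_chn t v), Multiset.map_cons]
    have hlen : (RT.sortMS (Multiset.map (codeAt t f) (chn t v).val)).length
        = (chn t v).card := by
      rw [RT.length_sortMS, Multiset.card_map]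
      rfl
    rw [hlen]
    congr 1
    rw [RT.degLF_sortMS, Multiset.map_map,
      map_biUnion_val (fun x hx y hy hne => Dset_disjoint hx hy hne)]
    apply congrArg Multiset.sum
    apply Multiset.map_congr rfl
    intro c hc
    have hlt := card_Dset_child_lt (c := c) hc
    exact ih c (by omega)

theorem canonP_codeAt (t : ParentTree n) :
    ∀ f v, RT.canonP (codeAt t f v) = true := by
  intro f
  induction f with
  | zero => intro v; rfl
  | succ f ih =>
    intro v
    simp only [codeAt, RT.canonP, Bool.and_eq_true]
    constructor
    · exact RT.sortedEnc_of_pairwise (RT.sortMS_sorted _)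
    · rw [RT.canonL_iff]
      intro c hc
      rw [RT.mem_sortMS] at hc
      obtain ⟨u, _, rfl⟩ := Multiset.mem_map.mp hc
      exact ih u

theorem Dset_root_eq_univ (t : ParentTree n) : Dset t t.root = Finset.univ := by
  apply Finset.eq_univ_of_forall
  intro u
  exact mem_Dset.mpr (t.reaches_root u)

theorem inDeg_eq (t : ParentTree n) (v : Fin n) :
    inDeg t v = (chn t v).card + (if v = t.root then 1 else 0) := by
  by_cases hv : v = t.root
  · rw [if_pos hv]
    subst hv
    have : Finset.univ.filter (fun u => t.parent u = t.root) = insert t.root (chn t t.root) := by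
      ext u
      simp only [Finset.mem_filter, Finset.mem_univ, true_and, Finset.mem_insert, mem_chn]
      constructor
      · intro h
        by_cases hu : u = t.root
        · exact Or.inl hu
        · exact Or.inr ⟨h, hu⟩
      · rintro (rfl | ⟨h, _⟩)
        · exact t.parent_root
        · exact h
    rw [inDeg, this, Finset.card_insert_of_notMem (fun h => (mem_chn.mp h).2 rfl)]
  · rw [if_neg hv]
    have : Finset.univ.filter (fun u => t.parent u = v) = chn t v := by
      ext u
      simp only [Finset.mem_filter, Finset.mem_univ, true_and, mem_chn]
      constructor
      · intro h
        refine ⟨h, fun hu => hv ?_⟩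
        subst hu
        exact eq_root_of_iterate_fixed (k := 1) h Nat.one_pos
      · exact fun h => h.1
    rw [inDeg, this]
    omega

theorem inDegType_eq_bumped (t : ParentTree n) :
    inDegType t = RT.bumpedMS (codeOf t) := by
  obtain ⟨m, rfl⟩ : ∃ m, n = m + 1 := ⟨n - 1, by have := t.root.pos; omega⟩
  set r := t.root with hr
  have hmem : r ∈ Finset.univ.val := Finset.mem_univ_val r
  have hnodup : (Finset.univ.val : Multiset (Fin (m+1))).Nodup := Finset.univ.nodup
  -- the degree list fact
  have hcard : (Dset t r).card ≤ m + 1 := by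
    calc (Dset t r).card ≤ Finset.univ.card := Finset.card_le_card (Finset.subset_univ _)
      _ = m + 1 := by simp
  have hdeg := degL_codeAt t (m+1) r hcard
  rw [Dset_root_eq_univ] at hdeg
  -- unfold codeOf
  unfold codeOf
  simp only [codeAt] at hdeg ⊢
  set L := RT.sortMS (Multiset.map (codeAt t m) (chn t r).val) with hL
  have hlen : L.length = (chn t r).card := by
    rw [hL, RT.length_sortMS, Multiset.card_map]
    rfl
  rw [RT.degL] at hdeg
  rw [← Multiset.cons_coe] at hdeg
  have huniv : (Finset.univ.val : Multiset (Fin (m+1)))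
      = r ::ₘ (Finset.univ.val.erase r) := (Multiset.cons_erase hmem).symm
  rw [huniv, Multiset.map_cons] at hdeg
  rw [hlen] at hdeg
  have htail : (RT.degLF L : Multiset ℕ)
      = Multiset.map (fun u => (chn t u).card) (Finset.univ.val.erase r) :=
    (Multiset.cons_inj_right _).mp hdeg
  -- now compute inDegType
  rw [inDegType, huniv, Multiset.map_cons]
  have hmap : Multiset.map (inDeg t) (Finset.univ.val.erase r)
      = Multiset.map (fun u => (chn t u).card) (Finset.univ.val.erase r) := by
    apply Multiset.map_congr rfl
    intro u hu
    have hune : u ≠ r := (Multiset.Nodup.mem_erase_iff hnodup).mp hu |>.1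
    rw [inDeg_eq, if_neg hune, Nat.add_zero]
  rw [hmap, ← htail, inDeg_eq, if_pos rfl]
  simp [RT.bumpedMS, hlen]

end PT

namespace PT

variable {n : ℕ}

theorem key : ∀ (N : ℕ) (t₁ t₂ : ParentTree n) (v₁ v₂ : Fin n) (f₁ f₂ : ℕ),
    (Dset t₁ v₁).card ≤ N → (Dset t₁ v₁).card ≤ f₁ → (Dset t₂ v₂).card ≤ f₂ →
    codeAt t₁ f₁ v₁ = codeAt t₂ f₂ v₂ →
    ∃ φ : Fin n → Fin n, Set.BijOn φ (Dset t₁ v₁) (Dset t₂ v₂) ∧ φ v₁ = v₂ ∧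
      ∀ u ∈ Dset t₁ v₁, u ≠ v₁ → φ (t₁.parent u) = t₂.parent (φ u) := by
  intro N
  induction N using Nat.strong_induction_on with
  | _ N IH =>
  intro t₁ t₂ v₁ v₂ f₁ f₂ hN h₁ h₂ hcode
  obtain ⟨g₁, rfl⟩ : ∃ g, f₁ = g + 1 :=
    ⟨f₁ - 1, by have := card_Dset_pos t₁ v₁; omega⟩
  obtain ⟨g₂, rfl⟩ : ∃ g, f₂ = g + 1 :=
    ⟨f₂ - 1, by have := card_Dset_pos t₂ v₂; omega⟩
  simp only [codeAt, RT.node.injEq] at hcode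
  have hms : Multiset.map (codeAt t₁ g₁) (chn t₁ v₁).val
      = Multiset.map (codeAt t₂ g₂) (chn t₂ v₂).val := by
    rw [← RT.sortMS_coe (Multiset.map (codeAt t₁ g₁) (chn t₁ v₁).val),
      ← RT.sortMS_coe (Multiset.map (codeAt t₂ g₂) (chn t₂ v₂).val), hcode]
  have hrel : Multiset.Rel (fun a b => codeAt t₁ g₁ a = codeAt t₂ g₂ b)
      (chn t₁ v₁).val (chn t₂ v₂).val := by
    rw [← Multiset.rel_map (f := codeAt t₁ g₁) (g := codeAt t₂ g₂), hms,
      Multiset.rel_eq]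
  -- the forest lemma
  have forest : ∀ (m₁ m₂ : Multiset (Fin n)),
      Multiset.Rel (fun a b => codeAt t₁ g₁ a = codeAt t₂ g₂ b) m₁ m₂ →
      m₁ ≤ (chn t₁ v₁).val → m₂ ≤ (chn t₂ v₂).val →
      ∃ φ : Fin n → Fin n,
        Set.BijOn φ (↑(m₁.toFinset.biUnion (Dset t₁))) (↑(m₂.toFinset.biUnion (Dset t₂))) ∧
        (∀ c ∈ m₁, φ c ∈ m₂) ∧
        ∀ u ∈ m₁.toFinset.biUnion (Dset t₁), u ∉ m₁ →
          φ (t₁.parent u) = t₂.parent (φ u) := by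
    intro m₁ m₂ hrel
    induction hrel with
    | zero =>
      intro _ _
      refine ⟨id, ?_, ?_, ?_⟩
      · simp [Set.bijOn_empty]
      · simp
      · simp
    | @cons a b as bs hab hrl ihf =>
      intro hm₁ hm₂
      have hm₁' : as ≤ (chn t₁ v₁).val := le_trans (Multiset.le_cons_self as a) hm₁
      have hm₂' : bs ≤ (chn t₂ v₂).val := le_trans (Multiset.le_cons_self bs b) hm₂
      have hndp₁ : (a ::ₘ as).Nodup := Multiset.nodup_of_le hm₁ (chn t₁ v₁).nodup
      have hndp₂ : (b ::ₘ bs).Nodup := Multiset.nodup_of_le hm₂ (chn t₂ v₂).nodup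
      have hanotin : a ∉ as := (Multiset.nodup_cons.mp hndp₁).1
      have hbnotin : b ∉ bs := (Multiset.nodup_cons.mp hndp₂).1
      have hachn : a ∈ chn t₁ v₁ :=
        Multiset.mem_of_le hm₁ (Multiset.mem_cons_self a as)
      have hbchn : b ∈ chn t₂ v₂ :=
        Multiset.mem_of_le hm₂ (Multiset.mem_cons_self b bs)
      have haschn : ∀ c ∈ as, c ∈ chn t₁ v₁ := fun c hc =>
        Multiset.mem_of_le hm₁ (Multiset.mem_cons_of_mem hc)
      have hbschn : ∀ c ∈ bs, c ∈ chn t₂ v₂ := fun c hc =>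
        Multiset.mem_of_le hm₂ (Multiset.mem_cons_of_mem hc)
      -- subtree bijection from strong induction
      have hlt : (Dset t₁ a).card < N :=
        lt_of_lt_of_le (card_Dset_child_lt hachn) hN
      obtain ⟨φa, hbija, hava, hinta⟩ :=
        IH (Dset t₁ a).card hlt t₁ t₂ a b g₁ g₂ le_rfl
          (by have := card_Dset_child_lt hachn; omega)
          (by have := card_Dset_child_lt hbchn; omega) hab
      obtain ⟨φr, hbijr, hrootr, hintr⟩ := ihf hm₁' hm₂'
      set F₁ := as.toFinset.biUnion (Dset t₁) with hF₁
      set F₂ := bs.toFinset.biUnion (Dset t₂) with hF₂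
      have hdisj₁ : Disjoint (Dset t₁ a) F₁ := by
        rw [hF₁, Finset.disjoint_biUnion_right]
        intro c hc
        exact Dset_disjoint hachn (haschn c (Multiset.mem_toFinset.mp hc))
          (fun h => hanotin (h ▸ Multiset.mem_toFinset.mp hc))
      have hdisj₂ : Disjoint (Dset t₂ b) F₂ := by
        rw [hF₂, Finset.disjoint_biUnion_right]
        intro c hc
        exact Dset_disjoint hbchn (hbschn c (Multiset.mem_toFinset.mp hc))
          (fun h => hbnotin (h ▸ Multiset.mem_toFinset.mp hc))
      refine ⟨fun u => if u ∈ Dset t₁ a then φa u else φr u, ?_, ?_, ?_⟩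
      · -- BijOn
        have hset₁ : ((a ::ₘ as).toFinset.biUnion (Dset t₁) : Finset (Fin n))
            = Dset t₁ a ∪ F₁ := by
          rw [Multiset.toFinset_cons, Finset.biUnion_insert]
        have hset₂ : ((b ::ₘ bs).toFinset.biUnion (Dset t₂) : Finset (Fin n))
            = Dset t₂ b ∪ F₂ := by
          rw [Multiset.toFinset_cons, Finset.biUnion_insert]
        rw [hset₁, hset₂, Finset.coe_union, Finset.coe_union]
        have hba : Set.BijOn (fun u => if u ∈ Dset t₁ a then φa u else φr u)
            (Dset t₁ a) (Dset t₂ b) := by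
          apply hbija.congr
          intro u hu
          have hu' : u ∈ Dset t₁ a := by exact_mod_cast hu
          show φa u = if u ∈ Dset t₁ a then φa u else φr u
          rw [if_pos hu']
        have hbr : Set.BijOn (fun u => if u ∈ Dset t₁ a then φa u else φr u)
            (F₁) (F₂) := by
          apply hbijr.congr
          intro u hu
          have hu' : u ∉ Dset t₁ a := by
            intro hmem
            exact Finset.disjoint_left.mp hdisj₁ hmem (by exact_mod_cast hu)
          show φr u = if u ∈ Dset t₁ a then φa u else φr u
          rw [if_neg hu']
        apply Set.BijOn.union hba hbr
        -- InjOn on union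
        rw [Set.injOn_union (by rw [Set.disjoint_iff_inter_eq_empty,
          ← Finset.coe_inter, Finset.disjoint_iff_inter_eq_empty.mp hdisj₁]; simp)]
        refine ⟨hba.injOn, hbr.injOn, ?_⟩
        intro x hx y hy hxy
        have h1 : (if x ∈ Dset t₁ a then φa x else φr x) ∈ (Dset t₂ b : Set (Fin n)) :=
          hba.mapsTo hx
        have h2 : (if y ∈ Dset t₁ a then φa y else φr y) ∈ (F₂ : Set (Fin n)) :=
          hbr.mapsTo hy
        rw [hxy] at h1
        exact Finset.disjoint_left.mp hdisj₂ (by exact_mod_cast h1) (by exact_mod_cast h2)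
      · -- roots
        intro c hc
        show (if c ∈ Dset t₁ a then φa c else φr c) ∈ b ::ₘ bs
        rcases Multiset.mem_cons.mp hc with rfl | hcas
        · rw [if_pos (self_mem_Dset t₁ c), hava]
          exact Multiset.mem_cons_self b bs
        · have hcnota : c ∉ Dset t₁ a := by
            intro hmem
            exact Finset.disjoint_left.mp hdisj₁ hmem
              (Finset.mem_biUnion.mpr ⟨c, Multiset.mem_toFinset.mpr hcas, self_mem_Dset t₁ c⟩)
          rw [if_neg hcnota]
          exact Multiset.mem_cons_of_mem (hrootr c hcas)
      · -- intertwine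
        intro u hu hnotin
        have hset₁ : ((a ::ₘ as).toFinset.biUnion (Dset t₁) : Finset (Fin n))
            = Dset t₁ a ∪ F₁ := by
          rw [Multiset.toFinset_cons, Finset.biUnion_insert]
        rw [hset₁, Finset.mem_union] at hu
        show (if t₁.parent u ∈ Dset t₁ a then φa (t₁.parent u) else φr (t₁.parent u))
          = t₂.parent (if u ∈ Dset t₁ a then φa u else φr u)
        rcases hu with hu | hu
        · have hune : u ≠ a := fun h => hnotin (h ▸ Multiset.mem_cons_self a as)
          have hpu : t₁.parent u ∈ Dset t₁ a := parent_mem_Dset hu hune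
          rw [if_pos hpu, if_pos hu]
          exact hinta u hu hune
        · have hunota : u ∉ Dset t₁ a := fun hmem =>
            Finset.disjoint_left.mp hdisj₁ hmem hu
          obtain ⟨c, hc, huc⟩ := Finset.mem_biUnion.mp hu
          have hcas : c ∈ as := Multiset.mem_toFinset.mp hc
          have hune : u ≠ c := fun h => hnotin (h ▸ Multiset.mem_cons_of_mem hcas)
          have hpu : t₁.parent u ∈ Dset t₁ c := parent_mem_Dset huc hune
          have hpuF : t₁.parent u ∈ F₁ := Finset.mem_biUnion.mpr ⟨c, hc, hpu⟩
          have hpunota : t₁.parent u ∉ Dset t₁ a := fun hmem =>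
            Finset.disjoint_left.mp hdisj₁ hmem hpuF
          rw [if_neg hpunota, if_neg hunota]
          exact hintr u hu (fun h => hnotin (Multiset.mem_cons_of_mem h))
  -- apply the forest lemma to all children
  obtain ⟨φF, hbijF, hrootF, hintF⟩ :=
    forest (chn t₁ v₁).val (chn t₂ v₂).val hrel le_rfl le_rfl
  simp only [Finset.val_toFinset] at hbijF hrootF hintF
  refine ⟨fun u => if u = v₁ then v₂ else φF u, ?_, if_pos rfl, ?_⟩
  · rw [Dset_partition t₁ v₁, Dset_partition t₂ v₂, Finset.coe_insert, Finset.coe_insert]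
    have heq : Set.BijOn (fun u => if u = v₁ then v₂ else φF u)
        ((chn t₁ v₁).biUnion (Dset t₁)) ((chn t₂ v₂).biUnion (Dset t₂)) := by
      apply hbijF.congr
      intro u hu
      have hu' : u ≠ v₁ := by
        intro h
        subst h
        exact not_mem_biUnion_chn t₁ u (by exact_mod_cast hu)
      show φF u = if u = v₁ then v₂ else φF u
      rw [if_neg hu']
    have := Set.BijOn.insert heq (a := v₁) ?hna
    · simpa using this
    case hna =>
      simp only [if_pos rfl]
      intro hmem
      exact not_mem_biUnion_chn t₂ v₂ (by exact_mod_cast hmem)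
  · intro u hu hune
    show (if t₁.parent u = v₁ then v₂ else φF (t₁.parent u)) = t₂.parent (if u = v₁ then v₂ else φF u)
    rw [if_neg hune]
    by_cases hu_chn : u ∈ (chn t₁ v₁).val
    · have : t₁.parent u = v₁ := (mem_chn.mp hu_chn).1
      rw [this, if_pos rfl]
      exact ((mem_chn.mp (hrootF u hu_chn)).1).symm
    · have huB : u ∈ (chn t₁ v₁).biUnion (Dset t₁) := by
        rw [Dset_partition t₁ v₁] at hu
        rcases Finset.mem_insert.mp hu with h | h
        · exact absurd h hune
        · exact h
      have hpune : t₁.parent u ≠ v₁ := by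
        intro h
        exact hu_chn (mem_chn.mpr ⟨h, hune⟩)
      rw [if_neg hpune]
      exact hintF u huB hu_chn

theorem iso_of_codeOf_eq {t₁ t₂ : ParentTree n} (h : codeOf t₁ = codeOf t₂) :
    ParentTreeIso n t₁ t₂ := by
  have hc1 : (Dset t₁ t₁.root).card ≤ n := by
    rw [Dset_root_eq_univ]; simp
  have hc2 : (Dset t₂ t₂.root).card ≤ n := by
    rw [Dset_root_eq_univ]; simp
  obtain ⟨φ, hbij, hroot, hint⟩ := key n t₁ t₂ t₁.root t₂.root n n hc1 hc1 hc2 h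
  rw [Dset_root_eq_univ, Dset_root_eq_univ, Finset.coe_univ] at hbij
  have hbijective : Function.Bijective φ := Set.bijOn_univ.mp hbij
  refine ⟨Equiv.ofBijective φ hbijective, hroot, ?_⟩
  intro v
  by_cases hv : v = t₁.root
  · subst hv
    show φ (t₁.parent t₁.root) = t₂.parent (φ t₁.root)
    rw [t₁.parent_root, hroot, t₂.parent_root]
  · show φ (t₁.parent v) = t₂.parent (φ v)
    exact hint v (by rw [Dset_root_eq_univ]; exact Finset.mem_univ v) hv

end PT

namespace RT

def forestsF : ℕ → ℕ → List (List RT)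
  | _, 0 => [[]]
  | 0, _ + 1 => []
  | f + 1, k + 1 =>
    (List.range (k + 1)).flatMap (fun s =>
      (forestsF f s).flatMap (fun ds =>
        (forestsF f (k - s)).map (fun cs => RT.node ds :: cs)))

theorem size_pos (r : RT) : 0 < size r := by
  match r with
  | .node cs =>
    have : size (.node cs) = 1 + sizeL cs := rfl
    omega

theorem mem_forestsF : ∀ (f : ℕ) (cs : List RT), sizeL cs ≤ f → cs ∈ forestsF f (sizeL cs) := by
  intro f
  induction f with
  | zero =>
    intro cs hcs
    match cs with
    | [] => simp [forestsF, sizeL]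
    | c :: cs =>
      exfalso
      have := size_pos c
      simp [sizeL] at hcs
      omega
  | succ f ih =>
    intro cs hcs
    match cs with
    | [] => simp [forestsF, sizeL]
    | (RT.node ds) :: cs' =>
      have hsz : sizeL ((RT.node ds) :: cs') = (sizeL ds + sizeL cs') + 1 := by
        simp [sizeL, size]; omega
      rw [hsz]
      set k := sizeL ds + sizeL cs' with hk
      show (RT.node ds) :: cs' ∈ forestsF (f+1) (k+1)
      rw [forestsF]
      rw [List.mem_flatMap]
      refine ⟨sizeL ds, ?_, ?_⟩
      · rw [List.mem_range]; omega
      · rw [List.mem_flatMap]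
        refine ⟨ds, ?_, ?_⟩
        · apply ih; omega
        · rw [List.mem_map]
          refine ⟨cs', ?_, rfl⟩
          have : k - sizeL ds = sizeL cs' := by omega
          rw [this]
          apply ih; omega

def allTrees9 : List RT := (forestsF 8 8).map RT.node

theorem mem_allTrees9 (r : RT) (h : size r = 9) : r ∈ allTrees9 := by
  match r with
  | .node cs =>
    have hcs : sizeL cs = 8 := by
      simp [size] at h; omega
    rw [allTrees9, List.mem_map]
    have h8 := mem_forestsF 8 cs (by omega)
    rw [hcs] at h8
    exact ⟨cs, h8, rfl⟩

end RT

open RT in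
def L : List RT := [
  .node [.node [], .node [.node [], .node [.node [.node [.node [.node []]]]]]],
  .node [.node [], .node [.node [.node []], .node [.node [.node [.node []]]]]],
  .node [.node [], .node [.node [.node [.node []]], .node [.node [.node []]]]],
  .node [.node [], .node [.node [.node [], .node [.node [.node [.node []]]]]]],
  .node [.node [], .node [.node [.node [.node []], .node [.node [.node []]]]]],
  .node [.node [], .node [.node [.node [.node [], .node [.node [.node []]]]]]],
  .node [.node [], .node [.node [.node [.node [.node []], .node [.node []]]]]],
  .node [.node [], .node [.node [.node [.node [.node [], .node [.node []]]]]]],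
  .node [.node [], .node [.node [.node [.node [.node [.node [], .node []]]]]]],
  .node [.node [.node []], .node [.node [], .node [.node [.node [.node []]]]]],
  .node [.node [.node []], .node [.node [.node []], .node [.node [.node []]]]],
  .node [.node [.node []], .node [.node [.node [], .node [.node [.node []]]]]],
  .node [.node [.node []], .node [.node [.node [.node []], .node [.node []]]]],
  .node [.node [.node []], .node [.node [.node [.node [], .node [.node []]]]]],
  .node [.node [.node []], .node [.node [.node [.node [.node [], .node []]]]]],
  .node [.node [.node [], .node []], .node [.node [.node [.node [.node []]]]]],
  .node [.node [.node [.node []]], .node [.node [], .node [.node [.node []]]]],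
  .node [.node [.node [.node []]], .node [.node [.node []], .node [.node []]]],
  .node [.node [.node [.node []]], .node [.node [.node [], .node [.node []]]]],
  .node [.node [.node [.node []]], .node [.node [.node [.node [], .node []]]]],
  .node [.node [.node [], .node [.node []]], .node [.node [.node [.node []]]]],
  .node [.node [.node [.node [], .node []]], .node [.node [.node [.node []]]]],
  .node [.node [.node [], .node [], .node [.node [.node [.node [.node []]]]]]],
  .node [.node [.node [], .node [.node []], .node [.node [.node [.node []]]]]],
  .node [.node [.node [], .node [.node [.node []]], .node [.node [.node []]]]],
  .node [.node [.node [.node []], .node [.node []], .node [.node [.node []]]]],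
  .node [.node [.node [.node [], .node [], .node [.node [.node [.node []]]]]]],
  .node [.node [.node [.node [], .node [.node []], .node [.node [.node []]]]]],
  .node [.node [.node [.node [.node []], .node [.node []], .node [.node []]]]],
  .node [.node [.node [.node [.node [], .node [], .node [.node [.node []]]]]]],
  .node [.node [.node [.node [.node [], .node [.node []], .node [.node []]]]]],
  .node [.node [.node [.node [.node [.node [], .node [], .node [.node []]]]]]],
  .node [.node [.node [.node [.node [.node [.node [], .node [], .node []]]]]]]]

namespace RT

def bumpedL : RT → List ℕ
  | .node cs => (cs.length + 1) :: degLF cs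

theorem bumpedMS_eq_coe (r : RT) : bumpedMS r = (bumpedL r : List ℕ) := by
  match r with
  | .node cs =>
    show (cs.length + 1) ::ₘ (degLF cs : List ℕ) = _
    rw [bumpedL, ← Multiset.cons_coe]

def sortN (l : List ℕ) : List ℕ := List.insertionSort (fun a b : ℕ => a ≤ b) l

theorem sortN_eq_of_perm {l₁ l₂ : List ℕ} (h : l₁.Perm l₂) : sortN l₁ = sortN l₂ := by
  have hp : (sortN l₁).Perm (sortN l₂) :=
    ((List.perm_insertionSort _ l₁).trans h).trans (List.perm_insertionSort _ l₂).symm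
  exact List.Perm.eq_of_pairwise' (r := fun a b : ℕ => a ≤ b)
    (List.pairwise_insertionSort _ l₁) (List.pairwise_insertionSort _ l₂) hp

def checkB (r : RT) : Bool :=
  !canonP r || !(sortN (bumpedL r) == [0,0,0,1,1,1,1,2,3]) || L.contains r

set_option maxRecDepth 1000000 in
theorem hall : RT.allTrees9.all checkB = true := by decide

theorem typeG_coe : typeG = (([3,2,1,1,1,1,0,0,0] : List ℕ) : Multiset ℕ) := rfl

theorem hcomplete : ∀ r ∈ RT.allTrees9, canonP r = true → bumpedMS r = typeG → r ∈ L := by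
  intro r hr h1 h2
  have hc := List.all_eq_true.mp hall r hr
  rw [checkB, h1] at hc
  have hperm : (bumpedL r).Perm [3,2,1,1,1,1,0,0,0] := by
    rw [← Multiset.coe_eq_coe, ← bumpedMS_eq_coe, ← typeG_coe]
    exact h2
  have hsort : sortN (bumpedL r) = sortN [3,2,1,1,1,1,0,0,0] := sortN_eq_of_perm hperm
  have hsort9 : sortN [3,2,1,1,1,1,0,0,0] = [0,0,0,1,1,1,1,2,3] := by decide
  rw [hsort, hsort9] at hc
  simp only [Bool.not_true, Bool.false_or, beq_self_eq_true] at hc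
  have : r ∈ L := by
    have := List.contains_iff_exists_mem_beq.mp hc
    obtain ⟨a, ha1, ha2⟩ := this
    rw [show r = a from by simpa using ha2]
    exact ha1
  exact this

end RT

def w0 : ParentTree 9 := ⟨![0, 0, 0, 2, 2, 4, 5, 6, 7], 0, rfl, fun v => ⟨8, by revert v; decide⟩⟩
def w1 : ParentTree 9 := ⟨![0, 0, 0, 2, 3, 2, 5, 6, 7], 0, rfl, fun v => ⟨8, by revert v; decide⟩⟩
def w2 : ParentTree 9 := ⟨![0, 0, 0, 2, 3, 4, 2, 6, 7], 0, rfl, fun v => ⟨8, by revert v; decide⟩⟩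
def w3 : ParentTree 9 := ⟨![0, 0, 0, 2, 3, 3, 5, 6, 7], 0, rfl, fun v => ⟨8, by revert v; decide⟩⟩
def w4 : ParentTree 9 := ⟨![0, 0, 0, 2, 3, 4, 3, 6, 7], 0, rfl, fun v => ⟨8, by revert v; decide⟩⟩
def w5 : ParentTree 9 := ⟨![0, 0, 0, 2, 3, 4, 4, 6, 7], 0, rfl, fun v => ⟨8, by revert v; decide⟩⟩
def w6 : ParentTree 9 := ⟨![0, 0, 0, 2, 3, 4, 5, 4, 7], 0, rfl, fun v => ⟨8, by revert v; decide⟩⟩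
def w7 : ParentTree 9 := ⟨![0, 0, 0, 2, 3, 4, 5, 5, 7], 0, rfl, fun v => ⟨8, by revert v; decide⟩⟩
def w8 : ParentTree 9 := ⟨![0, 0, 0, 2, 3, 4, 5, 6, 6], 0, rfl, fun v => ⟨8, by revert v; decide⟩⟩
def w9 : ParentTree 9 := ⟨![0, 0, 1, 0, 3, 3, 5, 6, 7], 0, rfl, fun v => ⟨8, by revert v; decide⟩⟩
def w10 : ParentTree 9 := ⟨![0, 0, 1, 0, 3, 4, 3, 6, 7], 0, rfl, fun v => ⟨8, by revert v; decide⟩⟩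
def w11 : ParentTree 9 := ⟨![0, 0, 1, 0, 3, 4, 4, 6, 7], 0, rfl, fun v => ⟨8, by revert v; decide⟩⟩
def w12 : ParentTree 9 := ⟨![0, 0, 1, 0, 3, 4, 5, 4, 7], 0, rfl, fun v => ⟨8, by revert v; decide⟩⟩
def w13 : ParentTree 9 := ⟨![0, 0, 1, 0, 3, 4, 5, 5, 7], 0, rfl, fun v => ⟨8, by revert v; decide⟩⟩
def w14 : ParentTree 9 := ⟨![0, 0, 1, 0, 3, 4, 5, 6, 6], 0, rfl, fun v => ⟨8, by revert v; decide⟩⟩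
def w15 : ParentTree 9 := ⟨![0, 0, 1, 1, 0, 4, 5, 6, 7], 0, rfl, fun v => ⟨8, by revert v; decide⟩⟩
def w16 : ParentTree 9 := ⟨![0, 0, 1, 2, 0, 4, 4, 6, 7], 0, rfl, fun v => ⟨8, by revert v; decide⟩⟩
def w17 : ParentTree 9 := ⟨![0, 0, 1, 2, 0, 4, 5, 4, 7], 0, rfl, fun v => ⟨8, by revert v; decide⟩⟩
def w18 : ParentTree 9 := ⟨![0, 0, 1, 2, 0, 4, 5, 5, 7], 0, rfl, fun v => ⟨8, by revert v; decide⟩⟩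
def w19 : ParentTree 9 := ⟨![0, 0, 1, 2, 0, 4, 5, 6, 6], 0, rfl, fun v => ⟨8, by revert v; decide⟩⟩
def w20 : ParentTree 9 := ⟨![0, 0, 1, 1, 3, 0, 5, 6, 7], 0, rfl, fun v => ⟨8, by revert v; decide⟩⟩
def w21 : ParentTree 9 := ⟨![0, 0, 1, 2, 2, 0, 5, 6, 7], 0, rfl, fun v => ⟨8, by revert v; decide⟩⟩
def w22 : ParentTree 9 := ⟨![0, 0, 1, 1, 1, 4, 5, 6, 7], 0, rfl, fun v => ⟨8, by revert v; decide⟩⟩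
def w23 : ParentTree 9 := ⟨![0, 0, 1, 1, 3, 1, 5, 6, 7], 0, rfl, fun v => ⟨8, by revert v; decide⟩⟩
def w24 : ParentTree 9 := ⟨![0, 0, 1, 1, 3, 4, 1, 6, 7], 0, rfl, fun v => ⟨8, by revert v; decide⟩⟩
def w25 : ParentTree 9 := ⟨![0, 0, 1, 2, 1, 4, 1, 6, 7], 0, rfl, fun v => ⟨8, by revert v; decide⟩⟩
def w26 : ParentTree 9 := ⟨![0, 0, 1, 2, 2, 2, 5, 6, 7], 0, rfl, fun v => ⟨8, by revert v; decide⟩⟩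
def w27 : ParentTree 9 := ⟨![0, 0, 1, 2, 2, 4, 2, 6, 7], 0, rfl, fun v => ⟨8, by revert v; decide⟩⟩
def w28 : ParentTree 9 := ⟨![0, 0, 1, 2, 3, 2, 5, 2, 7], 0, rfl, fun v => ⟨8, by revert v; decide⟩⟩
def w29 : ParentTree 9 := ⟨![0, 0, 1, 2, 3, 3, 3, 6, 7], 0, rfl, fun v => ⟨8, by revert v; decide⟩⟩
def w30 : ParentTree 9 := ⟨![0, 0, 1, 2, 3, 3, 5, 3, 7], 0, rfl, fun v => ⟨8, by revert v; decide⟩⟩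
def w31 : ParentTree 9 := ⟨![0, 0, 1, 2, 3, 4, 4, 4, 7], 0, rfl, fun v => ⟨8, by revert v; decide⟩⟩
def w32 : ParentTree 9 := ⟨![0, 0, 1, 2, 3, 4, 5, 5, 5], 0, rfl, fun v => ⟨8, by revert v; decide⟩⟩

def W : Fin 33 → ParentTree 9 := ![w0, w1, w2, w3, w4, w5, w6, w7, w8, w9, w10, w11, w12, w13, w14, w15, w16, w17, w18, w19, w20, w21, w22, w23, w24, w25, w26, w27, w28, w29, w30, w31, w32]

set_option maxRecDepth 1000000

theorem hL_len : L.length = 33 := rfl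

def Lget (i : Fin 33) : RT := L.get ⟨i.val, by rw [hL_len]; exact i.isLt⟩

theorem hWcode : ∀ i : Fin 33, PT.codeOf (W i) = Lget i := by decide

theorem hWdeg : ∀ i : Fin 33, RT.bumpedMS (Lget i) = typeG := by decide

theorem hWidx : ∀ i : Fin 33, List.idxOf (Lget i) L = i.val := by decide

theorem size_codeOf (t : ParentTree 9) : RT.size (PT.codeOf t) = 9 := by
  have h : (PT.Dset t t.root).card = 9 := by
    rw [PT.Dset_root_eq_univ]
    simp
  rw [PT.codeOf, PT.size_codeAt t 9 t.root (by omega), h]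

theorem codeOf_mem_L (t : ParentTree 9) (hdeg : inDegType t = typeG) : PT.codeOf t ∈ L := by
  apply RT.hcomplete _ (RT.mem_allTrees9 _ (size_codeOf t)) (PT.canonP_codeAt t 9 t.root)
  rw [← PT.inDegType_eq_bumped]
  exact hdeg

def codeQ : Quot (ParentTreeIso 9) → RT :=
  Quot.lift PT.codeOf (fun _ _ h => PT.codeOf_iso h)

abbrev QS : Type :=
  {c : Quot (ParentTreeIso 9) //
      ∃ t : ParentTree 9, c = Quot.mk _ t ∧ inDegType t = typeG}

theorem codeQ_mem (c : QS) : codeQ c.1 ∈ L := by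
  obtain ⟨t, hct, hdeg⟩ := c.2
  rw [hct]
  exact codeOf_mem_L t hdeg

def eqv : QS ≃ Fin 33 where
  toFun c := ⟨List.idxOf (codeQ c.1) L, by
    have := List.idxOf_lt_length_iff.mpr (codeQ_mem c)
    rw [hL_len] at this
    exact this⟩
  invFun i := ⟨Quot.mk _ (W i), W i, rfl, by
    rw [PT.inDegType_eq_bumped, hWcode i]
    exact hWdeg i⟩
  left_inv c := by
    apply Subtype.ext
    show Quot.mk _ (W _) = c.1
    obtain ⟨t, hct, hdeg⟩ := c.2
    have hmem : PT.codeOf t ∈ L := codeOf_mem_L t hdeg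
    have hidx : List.idxOf (codeQ c.1) L = List.idxOf (PT.codeOf t) L := by rw [hct]; rfl
    rw [hct]
    apply Quot.sound
    apply PT.iso_of_codeOf_eq
    rw [hWcode]
    show L.get _ = PT.codeOf t
    simp only [hidx]
    exact List.getElem_idxOf (List.idxOf_lt_length_iff.mpr hmem)
  right_inv i := by
    apply Fin.ext
    show List.idxOf (codeQ (Quot.mk _ (W i))) L = i.val
    have : codeQ (Quot.mk (ParentTreeIso 9) (W i)) = PT.codeOf (W i) := rfl
    rw [this, hWcode i]
    exact hWidx i

/-- There are exactly 33 isomorphism classes of rooted trees on 9 vertices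
whose in-degree type is the multiset `typeG`. -/
theorem card_parentTree_classes_9_typeG :
    Nat.card {c : Quot (ParentTreeIso 9) //
      ∃ t : ParentTree 9, c = Quot.mk _ t ∧ inDegType t = typeG} = 33 := by
  exact Nat.card_eq_of_equiv_fin eqv
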